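/- If x ⪯ z, then for any distinct vertices i,j and pattern g, the edge-increment counts satisfy N_g(x_{ij}^1) − N_g(x_{ij}^0) ≤ N_g(z_{ij}^1) − N_g(z_{ij}^0). -/

import Mathlib

/-- A simple undirected graph on vertex set `Fin N`, represented as a symmetric
Boolean adjacency matrix with zero diagonal. -/
def BoolGraph (N : ℕ) : Type :=
  {x : Fin N → Fin N → Bool // (∀ i j, x i j = x j i) ∧ ∀ i, x i i = false}

namespace BoolGraph

variable {N : ℕ}

instance : Finite (BoolGraph N) := by unfold BoolGraph; infer_instance

noncomputable instance : Fintype (BoolGraph N) := Fintype.ofFinite _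

/-- The edge-inclusion partial order: `x ⪯ y` iff every edge of `x` is an edge of `y`. -/
def le {N : ℕ} (x y : BoolGraph N) : Prop := ∀ i j, x.1 i j = true → y.1 i j = true

/-- The empty graph. -/
def empty (N : ℕ) : BoolGraph N := ⟨fun _ _ => false, fun _ _ => rfl, fun _ => rfl⟩

/-- The complete graph. -/
def complete (N : ℕ) : BoolGraph N :=
  ⟨fun i j => decide (i ≠ j), by
    intro i j
    simp [decide_eq_decide]
    exact eq_comm, by intro i; simp⟩

/-- `setEdge x i j a` is the graph `x` with the edge `(i,j)` (and `(j,i)`) set to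
the value `a` (when `i ≠ j`; if `i = j` the graph is unchanged). -/
def setEdge (x : BoolGraph N) (i j : Fin N) (a : Bool) : BoolGraph N :=
  if h : i = j then x else
    ⟨fun k l => if (k = i ∧ l = j) ∨ (k = j ∧ l = i) then a else x.1 k l,
      by
        intro k l
        have hiff : ((k = i ∧ l = j) ∨ (k = j ∧ l = i)) ↔ ((l = i ∧ k = j) ∨ (l = j ∧ k = i)) := by
          tauto
        dsimp only
        by_cases hc : (k = i ∧ l = j) ∨ (k = j ∧ l = i)
        · rw [if_pos hc, if_pos (hiff.mp hc)]
        · rw [if_neg hc, if_neg (fun hc' => hc (hiff.mpr hc'))]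
          exact x.2.1 k l,
      by
        intro k
        dsimp only
        rw [if_neg, x.2.2 k]
        rintro (⟨hk, hl⟩ | ⟨hk, hl⟩)
        · exact h (hk.symm.trans hl)
        · exact h (hl.symm.trans hk) ⟩

/-- `v` is an (injective, labeled) copy of the pattern `g` in `x`. -/
def Contains {m N : ℕ} (g : BoolGraph m) (x : BoolGraph N) (v : Fin m ↪ Fin N) : Prop :=
  ∀ k l, g.1 k l = true → x.1 (v k) (v l) = true

/-- The number of labeled copies of the pattern `g` in the graph `x`. -/
noncomputable def copyCount {m N : ℕ} (g : BoolGraph m) (x : BoolGraph N) : ℕ :=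
  Nat.card {v : Fin m ↪ Fin N // Contains g x v}

end BoolGraph

namespace BoolGraph

variable {N m : ℕ}

lemma setEdge_apply (x : BoolGraph N) {i j : Fin N} (hij : i ≠ j) (a : Bool) (k l : Fin N) :
    (setEdge x i j a).1 k l = if (k = i ∧ l = j) ∨ (k = j ∧ l = i) then a else x.1 k l := by
  simp [setEdge, hij]

lemma contains_mono (g : BoolGraph m) {x y : BoolGraph N} (h : BoolGraph.le x y) {v : Fin m ↪ Fin N} :
    Contains g x v → Contains g y v := fun hc k l hk => h _ _ (hc k l hk)

lemma le_setEdge_false_true (x : BoolGraph N) {i j : Fin N} (hij : i ≠ j) :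
    BoolGraph.le (setEdge x i j false) (setEdge x i j true) := by
  intro k l
  rw [setEdge_apply x hij, setEdge_apply x hij]
  split <;> simp_all

lemma copyCount_eq_ncard (g : BoolGraph m) (x : BoolGraph N) :
    copyCount g x = {v : Fin m ↪ Fin N | Contains g x v}.ncard := by
  rw [copyCount, ← Nat.card_coe_set_eq]
  rfl

end BoolGraph

open BoolGraph in
/-- if `x ⪯ z` then the edge-increment counts satisfy
`N_g(x_{ij}^1) − N_g(x_{ij}^0) ≤ N_g(z_{ij}^1) − N_g(z_{ij}^0)`. -/
theorem copyCount_increment_monotone {N m : ℕ} (g : BoolGraph m) (x z : BoolGraph N)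
    (hxz : BoolGraph.le x z) (i j : Fin N) (hij : i ≠ j) :
    (copyCount g (setEdge x i j true) : ℤ) - copyCount g (setEdge x i j false) ≤
    (copyCount g (setEdge z i j true) : ℤ) - copyCount g (setEdge z i j false) := by
  classical
  set A0 : Set (Fin m ↪ Fin N) := {v | Contains g (setEdge x i j false) v} with hA0
  set A1 : Set (Fin m ↪ Fin N) := {v | Contains g (setEdge x i j true) v} with hA1
  set B0 : Set (Fin m ↪ Fin N) := {v | Contains g (setEdge z i j false) v} with hB0
  set B1 : Set (Fin m ↪ Fin N) := {v | Contains g (setEdge z i j true) v} with hB1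
  have hA : A0 ⊆ A1 := fun v hv => contains_mono g (le_setEdge_false_true x hij) hv
  have hB : B0 ⊆ B1 := fun v hv => contains_mono g (le_setEdge_false_true z hij) hv
  have hkey : A1 \ A0 ⊆ B1 \ B0 := by
    rintro v ⟨hv1, hv0⟩
    have hC : ∃ k l, g.1 k l = true ∧ ((v k = i ∧ v l = j) ∨ (v k = j ∧ v l = i)) := by
      by_contra hcon
      push_neg at hcon
      apply hv0
      intro k l hkl
      have h1 := hv1 k l hkl
      rw [setEdge_apply x hij] at h1
      rw [setEdge_apply x hij]
      have hne : ¬ ((v k = i ∧ v l = j) ∨ (v k = j ∧ v l = i)) := by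
        have := hcon k l hkl; tauto
      rw [if_neg hne] at h1 ⊢
      exact h1
    constructor
    · intro k l hkl
      have h1 := hv1 k l hkl
      rw [setEdge_apply x hij] at h1
      rw [setEdge_apply z hij]
      by_cases hc : (v k = i ∧ v l = j) ∨ (v k = j ∧ v l = i)
      · rw [if_pos hc]
      · rw [if_neg hc] at h1 ⊢
        exact hxz _ _ h1
    · intro hv
      obtain ⟨k, l, hkl, hc⟩ := hC
      have := hv k l hkl
      rw [setEdge_apply z hij, if_pos hc] at this
      exact absurd this (by simp)
  have hfin : ∀ s : Set (Fin m ↪ Fin N), s.Finite := fun s => Set.toFinite s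
  have e1 : (copyCount g (setEdge x i j true) : ℤ) - copyCount g (setEdge x i j false)
      = ((A1 \ A0).ncard : ℤ) := by
    rw [copyCount_eq_ncard, copyCount_eq_ncard, Set.ncard_diff hA (hfin A0)]
    rw [Nat.cast_sub (Set.ncard_le_ncard hA (hfin A1))]
  have e2 : (copyCount g (setEdge z i j true) : ℤ) - copyCount g (setEdge z i j false)
      = ((B1 \ B0).ncard : ℤ) := by
    rw [copyCount_eq_ncard, copyCount_eq_ncard, Set.ncard_diff hB (hfin B0)]
    rw [Nat.cast_sub (Set.ncard_le_ncard hB (hfin B1))]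
  rw [e1, e2]
  exact_mod_cast Set.ncard_le_ncard hkey (hfin _)
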